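/- Let f: T × R → R be continuous with f(x, t+1) = f(x,t), and suppose there is an integer K with f(x,t) + f(x+1/2, 1/2−t) = K for all (x,t). Define the skew-product F̃(x,t) = (x+α, t + f(x,t)) and Birkhoff sums ψ_N(x,t) = Σ_{n=0}^{N−1} f(F̃ⁿ(x,t)). Then ψ_N(x,t) + ψ_N(x+1/2, 1/2−t) = N·K for all N ≥ 1 and all (x,t). Consequently, if the fibered rotation number ρ = lim_{N→∞} ψ_N(x,t)/N exists and is independent of (x,t), then 2ρ = K, i.e., 2ρ ≡ 0 (mod 1). -/

import Mathlib

open Filter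

/-- Birkhoff sums of `f` along the skew product `F̃(x,t) = (x+α, t+f(x,t))`. -/
noncomputable def skewBirkhoffSum (α : ℝ) (f : ℝ → ℝ → ℝ) (N : ℕ) (x t : ℝ) : ℝ :=
  ∑ n ∈ Finset.range N,
    f (((fun p : ℝ × ℝ => (p.1 + α, p.2 + f p.1 p.2))^[n] (x, t)).1)
      (((fun p : ℝ × ℝ => (p.1 + α, p.2 + f p.1 p.2))^[n] (x, t)).2)

/-- If `f : 𝕋 × ℝ → ℝ` is continuous, 1-periodic in both variables, and
satisfies `f(x,t) + f(x+1/2, 1/2−t) = K` for an integer `K`, then the Birkhoff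
sums along `F̃(x,t) = (x+α, t+f(x,t))` satisfy
`ψ_N(x,t) + ψ_N(x+1/2, 1/2−t) = N·K`; consequently, if the fibered rotation
number `ρ = lim ψ_N/N` exists independently of `(x,t)`, then `2ρ = K`, i.e.
`2ρ ≡ 0 (mod 1)`. -/
theorem birkhoff_symmetry_and_rotation_number (α : ℝ) (f : ℝ → ℝ → ℝ) (K : ℤ)
    (hc : Continuous (Function.uncurry f))
    (hperx : ∀ x t, f (x + 1) t = f x t)
    (hpert : ∀ x t, f x (t + 1) = f x t)
    (hsym : ∀ x t, f x t + f (x + 1/2) (1/2 - t) = K) :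
    (∀ N : ℕ, 1 ≤ N → ∀ x t,
      skewBirkhoffSum α f N x t + skewBirkhoffSum α f N (x + 1/2) (1/2 - t) = N * K) ∧
    (∀ ρ : ℝ,
      (∀ x t, Tendsto (fun N : ℕ => skewBirkhoffSum α f N x t / N) atTop (nhds ρ)) →
      2 * ρ = K) := by
  set F : ℝ × ℝ → ℝ × ℝ := fun p => (p.1 + α, p.2 + f p.1 p.2) with hF
  -- periodicity in t by integers
  have hint : ∀ (m : ℤ) (x t : ℝ), f x (t + m) = f x t := by
    intro m x t
    have hp : Function.Periodic (f x) 1 := fun s => hpert x s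
    have h2 := (hp.int_mul m) t
    simpa using h2
  -- key iterate identity
  have hiter : ∀ (n : ℕ) (x t : ℝ),
      F^[n] (x + 1/2, 1/2 - t) =
        ((F^[n] (x, t)).1 + 1/2, 1/2 - (F^[n] (x, t)).2 + n * K) := by
    intro n
    induction n with
    | zero => intro x t; simp
    | succ n ih =>
      intro x t
      rw [Function.iterate_succ_apply', Function.iterate_succ_apply', ih x t]
      set a := (F^[n] (x, t)).1
      set b := (F^[n] (x, t)).2
      have hfe : f (a + 1/2) (1/2 - b + n * K) = K - f a b := by
        have h1 : f (a + 1/2) (1/2 - b + (n * K : ℤ)) = f (a + 1/2) (1/2 - b) :=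
          hint (n * K) _ _
        have h2 := hsym a b
        push_cast at h1
        rw [h1]; linarith
      simp only [hF]
      refine Prod.ext ?_ ?_
      · simp; ring
      · simp only [hfe]
        push_cast
        ring
  have hpsi : ∀ (N : ℕ) (x t : ℝ),
      skewBirkhoffSum α f N x t + skewBirkhoffSum α f N (x + 1/2) (1/2 - t) = N * K := by
    intro N x t
    unfold skewBirkhoffSum
    rw [← Finset.sum_add_distrib]
    have : ∀ n ∈ Finset.range N,
        f ((F^[n] (x, t)).1) ((F^[n] (x, t)).2) +
          f ((F^[n] (x + 1/2, 1/2 - t)).1) ((F^[n] (x + 1/2, 1/2 - t)).2) = K := by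
      intro n _
      rw [hiter n x t]
      set a := (F^[n] (x, t)).1
      set b := (F^[n] (x, t)).2
      have h1 : f (a + 1/2) (1/2 - b + (n * K : ℤ)) = f (a + 1/2) (1/2 - b) :=
        hint (n * K) _ _
      push_cast at h1
      simp only [h1]
      exact hsym a b
    rw [Finset.sum_congr rfl this]
    simp
  refine ⟨fun N _ x t => hpsi N x t, ?_⟩
  intro ρ hρ
  have h1 := hρ 0 0
  have h2 := hρ (0 + 1/2) (1/2 - 0)
  have hadd : Tendsto (fun N : ℕ =>
      skewBirkhoffSum α f N 0 0 / N + skewBirkhoffSum α f N (0 + 1/2) (1/2 - 0) / N)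
      atTop (nhds (ρ + ρ)) := h1.add h2
  have heq : ∀ᶠ N : ℕ in atTop, (fun N : ℕ =>
      skewBirkhoffSum α f N 0 0 / N + skewBirkhoffSum α f N (0 + 1/2) (1/2 - 0) / N) N
      = (K : ℝ) := by
    filter_upwards [eventually_gt_atTop 0] with N hN
    have h := hpsi N 0 (0 : ℝ)
    have hne : (N : ℝ) ≠ 0 := Nat.cast_ne_zero.mpr hN.ne'
    rw [← add_div, h, mul_comm, mul_div_assoc, div_self hne, mul_one]
  have : Tendsto (fun _ : ℕ => (K : ℝ)) atTop (nhds (ρ + ρ)) :=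
    hadd.congr' heq
  have := tendsto_nhds_unique this tendsto_const_nhds
  linarith
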